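/- Let μ̄^L(0) = ((1-cos ω)/(3-2cos ω))²(1 + sin ω/(1+sin²ω)) and μ̄^R(0) = ((1-cos ω)/(3-2cos ω))²(1 - sin ω/(1+sin²ω)). If |φ₀^L|² = μ̄^L(0) and |φ₀^R|² = μ̄^R(0), then the stationary measure μ_I^{(Ψ̃₀)}(x) of Proposition 5.1 coincides with the time-averaged limit measure μ̄_∞(x) of Corollary 3.2 for every x ∈ ℤ. -/

import Mathlib

open Real

/-- The stationary measure of the one-defect quantum walk (Proposition 5.1). -/
noncomputable def stationaryMeasure (ω : ℝ) (φL φR : ℂ) (x : ℤ) : ℝ :=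
  (1 / (3 - 2 * Real.cos ω)) ^ x.natAbs *
    (if x = 0 then ‖φL‖ ^ 2 + ‖φR‖ ^ 2
     else if 0 < x then 2 * (2 - Real.cos ω) * ‖φL‖ ^ 2
     else 2 * (2 - Real.cos ω) * ‖φR‖ ^ 2)

/-- Time-averaged limit measure of the one-defect quantum walk (Corollary 3.2). -/
noncomputable def timeAvgMeasure (ω : ℝ) (x : ℤ) : ℝ :=
  if x = 0 then 2 * ((1 - Real.cos ω) / (3 - 2 * Real.cos ω)) ^ 2
  else
    (2 * ((1 - Real.cos ω) / (3 - 2 * Real.cos ω)) ^ 2) *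
      ((2 - Real.cos ω) / (3 - 2 * Real.cos ω) ^ (x.natAbs)) *
      (1 + (if 0 < x then (1 : ℝ) else -1) * Real.sin ω / (1 + Real.sin ω ^ 2))

theorem stationary_eq_timeAveraged (ω : ℝ) (hω : ω ∈ Set.Ico 0 (2 * π)) (φL φR : ℂ)
    (hL : ‖φL‖ ^ 2 =
      ((1 - Real.cos ω) / (3 - 2 * Real.cos ω)) ^ 2 *
        (1 + Real.sin ω / (1 + Real.sin ω ^ 2)))
    (hR : ‖φR‖ ^ 2 =
      ((1 - Real.cos ω) / (3 - 2 * Real.cos ω)) ^ 2 *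
        (1 - Real.sin ω / (1 + Real.sin ω ^ 2))) :
    ∀ x : ℤ, stationaryMeasure ω φL φR x = timeAvgMeasure ω x := by
  intro x
  unfold stationaryMeasure timeAvgMeasure
  by_cases h0 : x = 0
  · simp [h0, hL, hR]; ring
  · by_cases h1 : 0 < x
    · simp only [h0, h1, if_false, if_true, hL]
      rw [one_div_pow]; ring
    · simp only [h0, h1, if_false, hR]
      rw [one_div_pow]; ring
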